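/- Let r ≥ 1 and let M be a nondegenerate 2-dimensional linear subspace of the space of skew-symmetric (N+1)×(N+1) complex matrices such that every nonzero matrix in M has rank 2r. Then 2r ≤ N ≤ 3r−1. -/

import Mathlib

open Matrix Polynomial


lemma skew_dot {n : ℕ} {A : Matrix (Fin n) (Fin n) ℂ} (hA : Aᵀ = -A) (x y : Fin n → ℂ) :
    x ⬝ᵥ A.mulVec y = -(y ⬝ᵥ A.mulVec x) := by
  rw [Matrix.dotProduct_mulVec, ← Matrix.mulVec_transpose, hA, Matrix.neg_mulVec,
    neg_dotProduct, dotProduct_comm]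

lemma skew_dot_self {n : ℕ} {A : Matrix (Fin n) (Fin n) ℂ} (hA : Aᵀ = -A) (x : Fin n → ℂ) :
    x ⬝ᵥ A.mulVec x = 0 := by
  have := skew_dot hA x x
  linear_combination this / 2

/-- Rank-jump lemma: for skew `A, B`, if `rank (A + h•B) ≤ rank A` for all `h`, then any two
kernel vectors of `A` pair to zero under `B`. -/
lemma key_lemma {n : ℕ} (A B : Matrix (Fin n) (Fin n) ℂ) (hA : Aᵀ = -A) (hB : Bᵀ = -B)
    (hconst : ∀ h : ℂ, (A + h • B).rank ≤ A.rank)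
    {v w : Fin n → ℂ} (hv : A.mulVec v = 0) (hw : A.mulVec w = 0) :
    w ⬝ᵥ B.mulVec v = 0 := by
  by_contra hβ
  classical
  set K := LinearMap.ker A.mulVecLin with hK
  obtain ⟨W, hcompl⟩ := Submodule.exists_isCompl K
  set m := Module.finrank ℂ W with hm
  have bW : Module.Basis (Fin m) ℂ W := Module.finBasis ℂ W
  set e : Fin m → (Fin n → ℂ) := fun i => (bW i : Fin n → ℂ) with he
  set P : Matrix (Fin n) (Fin m) ℂ := Matrix.of (fun i j => e j i) with hP
  set V : Matrix (Fin n) (Fin 2) ℂ := Matrix.of (fun i j => ![v, w] j i) with hV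
  -- A kills V
  have hAV : A * V = 0 := by
    ext i b
    have h1 : (A * V) i b = A.mulVec (![v,w] b) i := by
      simp [Matrix.mul_apply, Matrix.mulVec, dotProduct, hV]
    rw [h1]
    fin_cases b <;> simp [hv, hw]
  have hVA : Vᵀ * A = 0 := by
    have h1 : Vᵀ * A = -((A * V)ᵀ) := by
      rw [Matrix.transpose_mul, hA, Matrix.mul_neg, neg_neg]
    rw [h1, hAV, Matrix.transpose_zero, neg_zero]
  -- linear independence of the columns of P
  have hli : LinearIndependent ℂ e := by
    have := bW.linearIndependent.map' W.subtype W.ker_subtype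
    exact this
  -- the compressed matrix A₀ is nonsingular
  set A₀ := Pᵀ * A * P with hA₀
  have hrankA : A.rank = m := by
    have h1 : A.rank + Module.finrank ℂ K = n := by
      have := LinearMap.finrank_range_add_finrank_ker A.mulVecLin
      simpa [Matrix.rank, Module.finrank_pi] using this
    have h2 : Module.finrank ℂ K + m = n := by
      have := Submodule.finrank_add_eq_of_isCompl hcompl
      simpa [hm, Module.finrank_pi] using this
    omega
  have hdetA₀ : A₀.det ≠ 0 := by
    intro hdet
    obtain ⟨x, hx0, hx⟩ := (Matrix.exists_mulVec_eq_zero_iff).mpr hdet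
    set y : Fin n → ℂ := P.mulVec x with hy
    have hysum : y = ∑ j, x j • e j := by
      funext i
      simp only [hy, Matrix.mulVec, dotProduct, hP, Matrix.of_apply, Finset.sum_apply,
        Pi.smul_apply, smul_eq_mul]
      exact Finset.sum_congr rfl fun j _ => mul_comm _ _
    have hyW : y ∈ W := by
      rw [hysum]
      exact Submodule.sum_mem _ fun j _ => Submodule.smul_mem _ _ (by simp [he])
    have hPz : ∀ j, e j ⬝ᵥ A.mulVec y = 0 := by
      intro j
      have h2 : Pᵀ.mulVec (A.mulVec y) = 0 := by
        rw [hy, Matrix.mulVec_mulVec, Matrix.mulVec_mulVec]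
        exact hx
      have h3 := congrFun h2 j
      simpa [Matrix.mulVec, dotProduct, Matrix.transpose_apply, hP] using h3
    have hz : A.mulVec y = 0 := by
      have hall : ∀ u : Fin n → ℂ, u ⬝ᵥ A.mulVec y = 0 := by
        intro u
        have hu : u ∈ K ⊔ W := by rw [hcompl.sup_eq_top]; trivial
        obtain ⟨uK, huK, uW, huW, rfl⟩ := Submodule.mem_sup.mp hu
        rw [add_dotProduct]
        have h1 : uK ⬝ᵥ A.mulVec y = 0 := by
          rw [skew_dot hA]
          have h0 : A.mulVec uK = 0 := huK
          rw [h0]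
          simp
        have h2 : uW ⬝ᵥ A.mulVec y = 0 := by
          obtain ⟨c, hc⟩ : ∃ c : Fin m → ℂ, uW = ∑ j, c j • e j := by
            refine ⟨fun j => bW.repr ⟨uW, huW⟩ j, ?_⟩
            have hrepr := bW.sum_repr ⟨uW, huW⟩
            calc uW = ((⟨uW, huW⟩ : W) : Fin n → ℂ) := rfl
              _ = ((∑ j, bW.repr ⟨uW, huW⟩ j • bW j : W) : Fin n → ℂ) := by rw [hrepr]
              _ = ∑ j, bW.repr ⟨uW, huW⟩ j • e j := by
                  simp only [Submodule.coe_sum, Submodule.coe_smul, he]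
          have : (∑ j, c j • e j) ⬝ᵥ A.mulVec y = ∑ j, c j * (e j ⬝ᵥ A.mulVec y) := by
            simp only [dotProduct, Finset.sum_apply, Pi.smul_apply, smul_eq_mul,
              Finset.sum_mul, Finset.mul_sum, mul_assoc]
            rw [Finset.sum_comm]
          rw [hc, this]
          simp [hPz]
        rw [h1, h2, add_zero]
      funext i
      have := hall (Pi.single i 1)
      simpa [single_dotProduct] using this
    have hyK : y ∈ K := hz
    have hy0 : y = 0 := by
      have : y ∈ K ⊓ W := ⟨hyK, hyW⟩
      rwa [hcompl.inf_eq_bot, Submodule.mem_bot] at this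
    have : ∀ j, x j = 0 := by
      have hsum : ∑ j, x j • e j = 0 := by rw [← hysum, hy0]
      exact Fintype.linearIndependent_iff.mp hli x hsum
    exact hx0 (funext this)
  -- the 2x2 block C₂ is nonsingular
  set β := w ⬝ᵥ B.mulVec v with hβdef
  set C₂ := Vᵀ * B * V with hC₂
  have hVBV : ∀ a b : Fin 2, C₂ a b = (![v,w] a) ⬝ᵥ B.mulVec (![v,w] b) := by
    intro a b
    rw [hC₂, Matrix.mul_assoc, Matrix.mul_apply]
    simp [Matrix.mul_apply, Matrix.mulVec, dotProduct, hV]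
  have hdetC₂ : C₂.det = β * β := by
    rw [Matrix.det_fin_two]
    have h00 : C₂ 0 0 = 0 := by rw [hVBV]; simpa using skew_dot_self hB v
    have h11 : C₂ 1 1 = 0 := by rw [hVBV]; simpa using skew_dot_self hB w
    have h10 : C₂ 1 0 = β := by rw [hVBV, hβdef]; simp
    have h01 : C₂ 0 1 = -β := by
      rw [hVBV, hβdef]
      simpa using skew_dot hB v w
    rw [h00, h11, h10, h01]
    ring
  -- auxiliary block matrices
  set B₀ := Pᵀ * B * P with hB₀
  set B₁ := Pᵀ * B * V with hB₁
  set B₂ := Vᵀ * B * P with hB₂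
  set g : ℂ[X] := Matrix.det (Matrix.fromBlocks
      (A₀.map Polynomial.C + (X : ℂ[X]) • B₀.map Polynomial.C)
      ((X : ℂ[X]) • B₁.map Polynomial.C) (B₂.map Polynomial.C) (C₂.map Polynomial.C)) with hg
  have hgeval : ∀ t : ℂ,
      g.eval t = Matrix.det (Matrix.fromBlocks (A₀ + t • B₀) (t • B₁) B₂ C₂) := by
    intro t
    have hmap := RingHom.map_det (Polynomial.evalRingHom t) (Matrix.fromBlocks
      (A₀.map Polynomial.C + (X : ℂ[X]) • B₀.map Polynomial.C)
      ((X : ℂ[X]) • B₁.map Polynomial.C) (B₂.map Polynomial.C) (C₂.map Polynomial.C))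
    have hblocks : ((Matrix.fromBlocks
        (A₀.map Polynomial.C + (X : ℂ[X]) • B₀.map Polynomial.C)
        ((X : ℂ[X]) • B₁.map Polynomial.C) (B₂.map Polynomial.C)
        (C₂.map Polynomial.C)).map (Polynomial.eval t)) =
        Matrix.fromBlocks (A₀ + t • B₀) (t • B₁) B₂ C₂ := by
      ext (i | i) (j | j) <;>
        simp [Matrix.map_apply, Matrix.fromBlocks, Matrix.add_apply, Matrix.smul_apply,
          smul_eq_mul, Matrix.of_apply] <;>
        ring
    rw [hg]
    show (Polynomial.evalRingHom t) _ = _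
    rw [hmap, RingHom.mapMatrix_apply, Polynomial.coe_evalRingHom, hblocks]
  have hg0 : g.eval 0 = A₀.det * C₂.det := by
    rw [hgeval 0]
    have h0 : Matrix.fromBlocks (A₀ + (0:ℂ) • B₀) ((0:ℂ) • B₁) B₂ C₂ =
        Matrix.fromBlocks A₀ 0 B₂ C₂ := by
      simp
    rw [h0, Matrix.det_fromBlocks_zero₁₂]
  have hgne : g ≠ 0 := by
    intro h
    rw [h, Polynomial.eval_zero] at hg0
    rcases mul_eq_zero.mp hg0.symm with h' | h'
    · exact hdetA₀ h'
    · rw [hdetC₂] at h'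
      exact hβ (by simpa using mul_self_eq_zero.mp h')
  have hfin : ({x : ℂ | g.IsRoot x} ∪ {0}).Finite :=
    (Polynomial.finite_setOf_isRoot hgne).union (Set.finite_singleton 0)
  obtain ⟨t, ht⟩ := hfin.infinite_compl.nonempty
  have ht0 : t ≠ 0 := fun h => ht (Set.mem_union_right _ (by simp [h]))
  have hteval : g.eval t ≠ 0 := fun h => ht (Set.mem_union_left _ h)
  -- the big compressed matrix
  set Q := Matrix.fromCols P V with hQ
  have hVAP : Vᵀ * (A * P) = 0 := by rw [← Matrix.mul_assoc, hVA, Matrix.zero_mul]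
  have hPAV : Pᵀ * (A * V) = 0 := by rw [hAV, Matrix.mul_zero]
  have hVAV : Vᵀ * (A * V) = 0 := by rw [hAV, Matrix.mul_zero]
  have h11b : Pᵀ * ((A + t • B) * P) = A₀ + t • B₀ := by
    simp [Matrix.mul_add, Matrix.add_mul, Matrix.smul_mul, Matrix.mul_smul, Matrix.mul_assoc,
      hA₀, hB₀]
  have h12b : Pᵀ * ((A + t • B) * V) = t • B₁ := by
    simp [Matrix.mul_add, Matrix.add_mul, Matrix.smul_mul, Matrix.mul_smul, Matrix.mul_assoc,
      hPAV, hAV, hB₁]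
  have h21b : Vᵀ * ((A + t • B) * P) = t • B₂ := by
    simp [Matrix.mul_add, Matrix.add_mul, Matrix.smul_mul, Matrix.mul_smul, Matrix.mul_assoc,
      hVAP, hB₂]
  have h22b : Vᵀ * ((A + t • B) * V) = t • C₂ := by
    simp [Matrix.mul_add, Matrix.add_mul, Matrix.smul_mul, Matrix.mul_smul, Matrix.mul_assoc,
      hVAV, hAV, hC₂]
  have hQmul : Qᵀ * ((A + t • B) * Q) =
      Matrix.fromBlocks (A₀ + t • B₀) (t • B₁) (t • B₂) (t • C₂) := by
    rw [hQ, Matrix.transpose_fromCols, Matrix.mul_fromCols,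
      Matrix.fromRows_mul_fromCols, h11b, h12b, h21b, h22b]
  have hfactor : Matrix.fromBlocks (A₀ + t • B₀) (t • B₁) (t • B₂) (t • C₂) =
      Matrix.fromBlocks (1 : Matrix (Fin m) (Fin m) ℂ) 0 0 (t • (1 : Matrix (Fin 2) (Fin 2) ℂ)) *
        Matrix.fromBlocks (A₀ + t • B₀) (t • B₁) B₂ C₂ := by
    rw [Matrix.fromBlocks_multiply]
    simp [Matrix.smul_mul]
  have hdetQ : Matrix.det (Qᵀ * ((A + t • B) * Q)) = t ^ 2 * g.eval t := by
    rw [hQmul, hfactor, Matrix.det_mul, Matrix.det_fromBlocks_zero₂₁, Matrix.det_one,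
      Matrix.det_smul, Matrix.det_one, hgeval t]
    simp [Fintype.card_fin]
  have hunit : IsUnit (Qᵀ * ((A + t • B) * Q)) := by
    rw [Matrix.isUnit_iff_isUnit_det, hdetQ]
    exact (mul_ne_zero (pow_ne_zero 2 ht0) hteval).isUnit
  have hcard : (Qᵀ * ((A + t • B) * Q)).rank = m + 2 := by
    rw [Matrix.rank_of_isUnit _ hunit]
    simp [Fintype.card_sum]
  have : m + 2 ≤ m := by
    calc m + 2 = (Qᵀ * ((A + t • B) * Q)).rank := hcard.symm
      _ ≤ ((A + t • B) * Q).rank := Matrix.rank_mul_le_right _ _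
      _ ≤ (A + t • B).rank := Matrix.rank_mul_le_left _ _
      _ ≤ A.rank := hconst t
      _ = m := hrankA
  omega


/-- For a nondegenerate 2-dimensional space of skew-symmetric
`(N+1)×(N+1)` complex matrices of constant rank `2r` one has `2r ≤ N ≤ 3r-1`. -/
theorem stmt_2 (r N : ℕ) (hr : 1 ≤ r)
    (M : Submodule ℂ (Matrix (Fin (N+1)) (Fin (N+1)) ℂ))
    (hdim : Module.finrank ℂ M = 2)
    (hskew : ∀ A ∈ M, Aᵀ = -A)
    (hrank : ∀ A ∈ M, A ≠ 0 → A.rank = 2*r)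
    (hker : (⨅ A ∈ M, LinearMap.ker (Matrix.mulVecLin A)) = ⊥)
    (hrange : (⨆ A ∈ M, LinearMap.range (Matrix.mulVecLin A)) = ⊤) :
    2*r ≤ N ∧ N ≤ 3*r - 1 := by
  classical
  have b : Module.Basis (Fin 2) ℂ M := Module.finBasisOfFinrankEq ℂ M hdim
  set A : Matrix (Fin (N+1)) (Fin (N+1)) ℂ := ((b 0 : M) : Matrix (Fin (N+1)) (Fin (N+1)) ℂ)
    with hAdef
  set B : Matrix (Fin (N+1)) (Fin (N+1)) ℂ := ((b 1 : M) : Matrix (Fin (N+1)) (Fin (N+1)) ℂ)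
    with hBdef
  have hAM : A ∈ M := (b 0).2
  have hBM : B ∈ M := (b 1).2
  have hli : LinearIndependent ℂ
      (fun i : Fin 2 => ((b i : M) : Matrix (Fin (N+1)) (Fin (N+1)) ℂ)) :=
    b.linearIndependent.map' M.subtype M.ker_subtype
  have hcomb : ∀ c d : ℂ, c • A + d • B = 0 → c = 0 ∧ d = 0 := by
    intro c d h
    have h2 := Fintype.linearIndependent_iff.mp hli ![c, d] (by
      rw [Fin.sum_univ_two]
      simpa using h)
    exact ⟨h2 0, h2 1⟩
  have hne : ∀ c d : ℂ, ¬(c = 0 ∧ d = 0) → c • A + d • B ≠ 0 := fun c d h h0 => h (hcomb c d h0)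
  have hmem : ∀ c d : ℂ, c • A + d • B ∈ M := fun c d =>
    M.add_mem (M.smul_mem c hAM) (M.smul_mem d hBM)
  have hrk : ∀ c d : ℂ, ¬(c = 0 ∧ d = 0) → (c • A + d • B).rank = 2*r := fun c d h =>
    hrank _ (hmem c d) (hne c d h)
  have hrep : ∀ C ∈ M, ∃ c d : ℂ, C = c • A + d • B := by
    intro Cm hC
    refine ⟨b.repr ⟨Cm, hC⟩ 0, b.repr ⟨Cm, hC⟩ 1, ?_⟩
    have hs := b.sum_repr ⟨Cm, hC⟩
    calc Cm = ((⟨Cm, hC⟩ : M) : Matrix (Fin (N+1)) (Fin (N+1)) ℂ) := rfl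
      _ = ((∑ i, b.repr ⟨Cm, hC⟩ i • b i : M) : Matrix (Fin (N+1)) (Fin (N+1)) ℂ) := by
          rw [hs]
      _ = b.repr ⟨Cm, hC⟩ 0 • A + b.repr ⟨Cm, hC⟩ 1 • B := by
          rw [Fin.sum_univ_two]
          push_cast
          rfl
  have hKAB : ∀ x, A.mulVec x = 0 → B.mulVec x = 0 → x = 0 := by
    intro x hxA hxB
    have hx : x ∈ (⨅ C ∈ M, LinearMap.ker (Matrix.mulVecLin C)) := by
      simp only [Submodule.mem_iInf]
      intro Cm hC
      obtain ⟨c, d, rfl⟩ := hrep Cm hC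
      simp [LinearMap.mem_ker, Matrix.add_mulVec, Matrix.smul_mulVec, hxA, hxB]
    rw [hker] at hx
    exact hx
  have hA : Aᵀ = -A := hskew A hAM
  have hB : Bᵀ = -B := hskew B hBM
  have hA0 : A ≠ 0 := by
    intro h
    exact b.ne_zero 0 (Submodule.coe_eq_zero.mp h)
  have hB0 : B ≠ 0 := by
    intro h
    exact b.ne_zero 1 (Submodule.coe_eq_zero.mp h)
  have hrkA : A.rank = 2*r := hrank A hAM hA0
  have hrkB : B.rank = 2*r := hrank B hBM hB0
  have hfr : Module.finrank ℂ (Fin (N+1) → ℂ) = N+1 := by simp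
  -- Part 1 : 2r ≤ N
  have hrankle : 2*r ≤ N + 1 := by
    have h1 := Matrix.rank_le_card_width A
    rw [hrkA] at h1
    simpa using h1
  have hlow : 2*r ≤ N := by
    by_contra hlt
    have h2rn : 2*r = N+1 := by omega
    have hdetA : A.det ≠ 0 := by
      intro h
      obtain ⟨x, hx0, hx⟩ := Matrix.exists_mulVec_eq_zero_iff.mpr h
      have h1 := LinearMap.finrank_range_add_finrank_ker A.mulVecLin
      have h2 : Module.finrank ℂ (LinearMap.range A.mulVecLin) = 2*r := hrkA
      have h3 : 0 < Module.finrank ℂ (LinearMap.ker A.mulVecLin) := by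
        rw [Module.finrank_pos_iff]
        exact ⟨⟨⟨x, hx⟩, 0, fun h => hx0 (by simpa using congrArg Subtype.val h)⟩⟩
      rw [h2, hfr] at h1
      omega
    obtain ⟨μ, hμ⟩ := Module.End.exists_eigenvalue (Matrix.mulVecLin (A⁻¹ * B))
    obtain ⟨x, hx⟩ := hμ.exists_hasEigenvector
    have hx0 : x ≠ 0 := hx.right
    have hfx : (A⁻¹ * B).mulVec x = μ • x := hx.apply_eq_smul
    have hBx : B.mulVec x = μ • A.mulVec x := by
      have h1 : A.mulVec ((A⁻¹ * B).mulVec x) = B.mulVec x := by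
        rw [Matrix.mulVec_mulVec, ← Matrix.mul_assoc, Matrix.mul_nonsing_inv A (isUnit_iff_ne_zero.mpr hdetA),
          Matrix.one_mul]
      rw [← h1, hfx, Matrix.mulVec_smul]
    have hCx : (μ • A + (-1 : ℂ) • B).mulVec x = 0 := by
      rw [Matrix.add_mulVec, Matrix.smul_mulVec, Matrix.smul_mulVec, hBx]
      simp
    have hrkC : (μ • A + (-1 : ℂ) • B).rank = 2*r := hrk μ (-1) (by simp)
    have h1 := LinearMap.finrank_range_add_finrank_ker (μ • A + (-1 : ℂ) • B).mulVecLin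
    have h2 : Module.finrank ℂ (LinearMap.range (μ • A + (-1 : ℂ) • B).mulVecLin) = 2*r := hrkC
    have h3 : 0 < Module.finrank ℂ (LinearMap.ker (μ • A + (-1 : ℂ) • B).mulVecLin) := by
      rw [Module.finrank_pos_iff]
      exact ⟨⟨⟨x, hCx⟩, 0, fun h => hx0 (by simpa using congrArg Subtype.val h)⟩⟩
    rw [h2, hfr] at h1
    omega
  refine ⟨hlow, ?_⟩
  -- Part 2 : N ≤ 3r - 1
  set KA := LinearMap.ker A.mulVecLin with hKAdef
  set KB := LinearMap.ker B.mulVecLin with hKBdef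
  set k := Module.finrank ℂ KA with hkdef
  have hkA : 2*r + k = N+1 := by
    have h1 := LinearMap.finrank_range_add_finrank_ker A.mulVecLin
    have h2 : Module.finrank ℂ (LinearMap.range A.mulVecLin) = 2*r := hrkA
    rw [hfr, h2, ← hKAdef] at h1
    rw [hkdef]
    exact h1
  have hkB : Module.finrank ℂ KB = k := by
    have h1 := LinearMap.finrank_range_add_finrank_ker B.mulVecLin
    have h2 : Module.finrank ℂ (LinearMap.range B.mulVecLin) = 2*r := hrkB
    rw [hfr, h2, ← hKBdef] at h1
    omega
  have hdisj : KA ⊓ KB = ⊥ := by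
    rw [Submodule.eq_bot_iff]
    rintro x ⟨h1, h2⟩
    exact hKAB x h1 h2
  set Ws := KA ⊔ KB with hWsdef
  have hdimW : Module.finrank ℂ Ws = 2*k := by
    have h1 := Submodule.finrank_sup_add_finrank_inf_eq KA KB
    rw [hdisj, hkB, ← hWsdef] at h1
    rw [finrank_bot] at h1
    omega
  have hconstB : ∀ h : ℂ, (B + h • A).rank ≤ B.rank := by
    intro h
    calc (B + h • A).rank = (h • A + (1:ℂ) • B).rank := by
          rw [one_smul]
          exact congrArg Matrix.rank (add_comm B (h • A))
      _ = 2*r := hrk h 1 (by simp)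
      _ = B.rank := hrkB.symm
      _ ≤ B.rank := le_rfl
  have hisoA : ∀ x ∈ Ws, ∀ y ∈ Ws, x ⬝ᵥ A.mulVec y = 0 := by
    intro x hx y hy
    obtain ⟨xa, hxa, xb, hxb, rfl⟩ := Submodule.mem_sup.mp hx
    obtain ⟨ya, hya, yb, hyb, rfl⟩ := Submodule.mem_sup.mp hy
    have hxaK : A.mulVec xa = 0 := hxa
    have hyaK : A.mulVec ya = 0 := hya
    have hxbK : B.mulVec xb = 0 := hxb
    have hybK : B.mulVec yb = 0 := hyb
    have t1 : xa ⬝ᵥ A.mulVec ya = 0 := by rw [hyaK]; simp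
    have t3 : xb ⬝ᵥ A.mulVec ya = 0 := by rw [hyaK]; simp
    have t2 : xa ⬝ᵥ A.mulVec yb = 0 := by
      rw [skew_dot hA, hxaK]
      simp
    have t4 : xb ⬝ᵥ A.mulVec yb = 0 := key_lemma B A hB hA hconstB hybK hxbK
    rw [Matrix.mulVec_add, add_dotProduct, dotProduct_add, dotProduct_add,
      t1, t2, t3, t4]
    simp
  have hdual : ∀ u y : Fin (N+1) → ℂ, (Pi.basisFun ℂ (Fin (N+1))).toDual u y = y ⬝ᵥ u := by
    intro u y
    have hy : ∑ i, y i • (Pi.basisFun ℂ (Fin (N+1))) i = y := by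
      have h0 := (Pi.basisFun ℂ (Fin (N+1))).sum_repr y
      simpa [Pi.basisFun_repr] using h0
    calc (Pi.basisFun ℂ (Fin (N+1))).toDual u y
        = (Pi.basisFun ℂ (Fin (N+1))).toDual u (∑ i, y i • (Pi.basisFun ℂ (Fin (N+1))) i) := by
          rw [hy]
      _ = ∑ i, y i * ((Pi.basisFun ℂ (Fin (N+1))).toDual u ((Pi.basisFun ℂ (Fin (N+1))) i)) := by
          rw [map_sum]
          simp only [_root_.map_smul, smul_eq_mul]
      _ = ∑ i, y i * u i := by
          simp only [Module.Basis.toDual_apply_left, Pi.basisFun_repr]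
      _ = y ⬝ᵥ u := rfl
  set eD := (Pi.basisFun ℂ (Fin (N+1))).toDualEquiv with heD
  set Wd := Ws.dualAnnihilator.comap
      (eD : (Fin (N+1) → ℂ) →ₗ[ℂ] Module.Dual ℂ (Fin (N+1) → ℂ)) with hWddef
  have hWdim : Module.finrank ℂ Wd + 2*k = N+1 := by
    have h1 : Module.finrank ℂ Wd = Module.finrank ℂ Ws.dualAnnihilator := by
      rw [hWddef, Submodule.comap_equiv_eq_map_symm]
      exact LinearEquiv.finrank_map_eq _ _
    have h2 := LinearEquiv.finrank_eq (Subspace.quotEquivAnnihilator Ws)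
    have h3 := Submodule.finrank_quotient_add_finrank Ws
    rw [hfr, hdimW] at h3
    rw [h1, ← h2]
    exact h3
  set f2 := A.mulVecLin.comp Ws.subtype with hf2
  have hrange2 : LinearMap.range f2 = Submodule.map A.mulVecLin Ws := by
    rw [hf2, LinearMap.range_comp, Submodule.range_subtype]
  have hrnf2 := LinearMap.finrank_range_add_finrank_ker f2
  rw [hdimW] at hrnf2
  have hkerbound : Module.finrank ℂ (LinearMap.ker f2) ≤ k := by
    have hker_eq : LinearMap.ker f2 = KA.comap Ws.subtype := by
      ext z
      simp [hf2, LinearMap.mem_ker, Submodule.mem_comap, hKAdef]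
    rw [hker_eq]
    have he := Submodule.equivSubtypeMap Ws (KA.comap Ws.subtype)
    have heq : (KA.comap Ws.subtype).map Ws.subtype = Ws ⊓ KA := Submodule.map_comap_subtype _ _
    calc Module.finrank ℂ (KA.comap Ws.subtype)
        = Module.finrank ℂ ((KA.comap Ws.subtype).map Ws.subtype) := LinearEquiv.finrank_eq he
      _ = Module.finrank ℂ (Ws ⊓ KA : Submodule ℂ (Fin (N+1) → ℂ)) := by rw [heq]
      _ ≤ Module.finrank ℂ KA := Submodule.finrank_mono inf_le_right
  have hmaple : Submodule.map A.mulVecLin Ws ≤ Wd := by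
    rintro _ ⟨y, hy, rfl⟩
    rw [hWddef, Submodule.mem_comap, Submodule.mem_dualAnnihilator]
    intro w hw
    have h1 : (eD (A.mulVecLin y)) w = w ⬝ᵥ A.mulVec y := by
      rw [heD, Module.Basis.toDualEquiv_apply, hdual]
      simp
    rw [LinearEquiv.coe_coe, h1]
    exact hisoA w hw y hy
  have hrangebound : Module.finrank ℂ (LinearMap.range f2) ≤ Module.finrank ℂ Wd := by
    rw [hrange2]
    exact Submodule.finrank_mono hmaple
  omega
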